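/- Grafting countably many losing choosing-nodes games onto pairwise incomparable positions of the binary tree yields a losing game of value at least the supremum: if for each i ∈ ℕ, Zᵢ ⊆ {0,1}^{<ω} gives a choosing-nodes game of value αᵢ in which Black loses, and (wᵢ) are pairwise prefix-incomparable nodes, then Z = ⋃ᵢ {wᵢ⌢v : v ∈ Zᵢ} gives a game in which Black loses with value at least sup_i αᵢ. -/

import Mathlib

/-- Two nodes of the binary tree are incomparable if neither is a prefix of the other. -/
def Incomp (u v : List Bool) : Prop := ¬(u <+: v ∨ v <+: u)

/-- Black has lost once the list of named nodes contains an incomparable pair. -/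
def Lost (p : List (List Bool)) : Prop := ∃ u ∈ p, ∃ v ∈ p, Incomp u v

/-- Ordinal game values for White in the choosing-nodes-from-`Z` game. A position (the
finite list of nodes named so far) has value `0` once Black has named an incomparable
pair; otherwise, with Black to move, its value is the supremum over Black's legal moves
(previously unnamed elements of `Z`) of the values of the resulting positions plus one. -/
inductive CGValue (Z : Set (List Bool)) : List (List Bool) → Ordinal → Prop
  | lost (p : List (List Bool)) (h : Lost p) : CGValue Z p 0
  | step (p : List (List Bool)) (h : ¬ Lost p) (g : List Bool → Ordinal)
      (hg : ∀ z ∈ Z, z ∉ p → CGValue Z (p ++ [z]) (g z)) :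
      CGValue Z p (⨆ z : {z : List Bool // z ∈ Z ∧ z ∉ p}, (g z.1 + 1))

lemma incomp_append_left {x u v : List Bool} : Incomp (x ++ u) (x ++ v) ↔ Incomp u v := by
  unfold Incomp
  rw [List.prefix_append_right_inj, List.prefix_append_right_inj]

lemma incomp_graft {x y : List Bool} (h : Incomp x y) (u v : List Bool) :
    Incomp (x ++ u) (y ++ v) := by
  rintro (h1 | h1)
  · exact h (List.prefix_or_prefix_of_prefix ((List.prefix_append x u).trans h1)
      (List.prefix_append y v))
  · exact h (List.prefix_or_prefix_of_prefix (List.prefix_append x u)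
      ((List.prefix_append y v).trans h1))

lemma graft_ne {x y u v : List Bool} (h : Incomp x y) : x ++ u ≠ y ++ v := fun he =>
  incomp_graft h u v (Or.inl (he ▸ List.prefix_refl _))

lemma lost_map {x : List Bool} {p : List (List Bool)} :
    Lost (p.map (x ++ ·)) ↔ Lost p := by
  constructor
  · rintro ⟨u, hu, v, hv, huv⟩
    obtain ⟨u', hu', rfl⟩ := List.mem_map.1 hu
    obtain ⟨v', hv', rfl⟩ := List.mem_map.1 hv
    exact ⟨u', hu', v', hv', incomp_append_left.1 huv⟩
  · rintro ⟨u, hu, v, hv, huv⟩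
    exact ⟨_, List.mem_map_of_mem hu, _, List.mem_map_of_mem hv,
      incomp_append_left.2 huv⟩

section Main
variable (Z : ℕ → Set (List Bool)) (w : ℕ → List Bool)
  (hw : ∀ i j : ℕ, i ≠ j → Incomp (w i) (w j))

/-- The grafted set. -/
local notation "Z'" => ⋃ i : ℕ, (fun v => w i ++ v) '' Z i

include hw in
lemma lemA (i : ℕ) {q : List (List Bool)} {α : Ordinal}
    (hcv : CGValue (Z i) q α) (hq : q ≠ []) :
    ∃ β : Ordinal, α ≤ β ∧ CGValue Z' (q.map (w i ++ ·)) β := by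
  induction hcv with
  | lost p hL =>
      exact ⟨0, le_rfl, CGValue.lost _ (lost_map.2 hL)⟩
  | step p hL g hg ih =>
      obtain ⟨u0, hu0⟩ : ∃ u, u ∈ p := by
        cases p with
        | nil => exact absurd rfl hq
        | cons a l => exact ⟨a, List.mem_cons_self⟩
      have key : ∀ z : List Bool, ∃ β : Ordinal,
          (z ∈ Z' → z ∉ p.map (w i ++ ·) → CGValue Z' (p.map (w i ++ ·) ++ [z]) β) ∧
          (∀ v ∈ Z i, v ∉ p → z = w i ++ v → g v ≤ β) := by
        intro z
        by_cases hz : ∃ v, v ∈ Z i ∧ v ∉ p ∧ z = w i ++ v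
        · obtain ⟨v, hv1, hv2, rfl⟩ := hz
          obtain ⟨β, hβ1, hβ2⟩ := ih v hv1 hv2 (by simp)
          refine ⟨β, fun _ _ => ?_, fun v' hv'1 hv'2 he => ?_⟩
          · have : (p ++ [v]).map (w i ++ ·) = p.map (w i ++ ·) ++ [w i ++ v] := by simp
            rwa [this] at hβ2
          · obtain rfl : v' = v := List.append_cancel_left he.symm
            exact hβ1
        · refine ⟨0, fun hzZ hzp => ?_, fun v' hv'1 hv'2 he => ?_⟩
          · obtain ⟨_, ⟨j, rfl⟩, v, hvj, rfl⟩ := hzZ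
            have hji : j ≠ i := by
              rintro rfl
              rcases Classical.em (v ∈ p) with hvp | hvp
              · exact hzp (List.mem_map_of_mem hvp)
              · exact hz ⟨v, hvj, hvp, rfl⟩
            refine CGValue.lost _ ⟨w i ++ u0, ?_, w j ++ v, ?_, incomp_graft (hw i j (Ne.symm hji)) _ _⟩
            · exact List.mem_append_left _ (List.mem_map_of_mem hu0)
            · exact List.mem_append_right _ (List.mem_singleton_self _)
          · exact absurd ⟨v', hv'1, hv'2, he⟩ hz
      choose g' hg'1 hg'2 using key
      refine ⟨_, ?_, CGValue.step _ (fun hl => hL (lost_map.1 hl)) g' hg'1⟩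
      refine ciSup_le' ?_
      rintro ⟨v, hv1, hv2⟩
      have h1 : g v ≤ g' (w i ++ v) := hg'2 _ v hv1 hv2 rfl
      have hmem : w i ++ v ∈ Z' := Set.mem_iUnion.2 ⟨i, ⟨v, hv1, rfl⟩⟩
      have hnmem : w i ++ v ∉ p.map (w i ++ ·) := by
        intro hm
        obtain ⟨u, hu, he⟩ := List.mem_map.1 hm
        exact hv2 ((List.append_cancel_left he) ▸ hu)
      calc g v + 1 ≤ g' (w i ++ v) + 1 := by
            exact add_le_add_left h1 1
        _ ≤ _ := le_ciSup (Ordinal.bddAbove_range _)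
            (⟨w i ++ v, hmem, hnmem⟩ : {z : List Bool // z ∈ Z' ∧ z ∉ p.map (w i ++ ·)})

end Main

lemma nil_inv {Z : Set (List Bool)} {α : Ordinal} (h : CGValue Z [] α) :
    ∃ g : List Bool → Ordinal, (∀ z ∈ Z, CGValue Z [z] (g z)) ∧
      α = ⨆ z : {z : List Bool // z ∈ Z ∧ z ∉ ([] : List (List Bool))}, (g z.1 + 1) := by
  cases h with
  | lost _ hl => exact absurd hl (by simp [Lost])
  | step _ _ g hg =>
      exact ⟨g, fun z hz => by simpa using hg z hz (by simp), rfl⟩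


/-- Grafting countably many losing choosing-nodes games onto pairwise incomparable nodes
gives a losing game of value at least the supremum of the values. -/
theorem graft_sup (Z : ℕ → Set (List Bool)) (a : ℕ → Ordinal)
    (h : ∀ i : ℕ, CGValue (Z i) [] (a i))
    (w : ℕ → List Bool) (hw : ∀ i j : ℕ, i ≠ j → Incomp (w i) (w j)) :
    ∃ β : Ordinal, (⨆ i : ℕ, a i) ≤ β ∧
      CGValue (⋃ i : ℕ, (fun v => w i ++ v) '' Z i) [] β := by
  choose G hG1 hG2 using fun i => nil_inv (h i)
  set Z' := ⋃ i : ℕ, (fun v => w i ++ v) '' Z i with hZ'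
  have key : ∀ z : List Bool, ∃ β : Ordinal,
      (z ∈ Z' → CGValue Z' [z] β) ∧
      (∀ i, ∀ v ∈ Z i, z = w i ++ v → G i v ≤ β) := by
    intro z
    by_cases hz : z ∈ Z'
    · obtain ⟨_, ⟨j, rfl⟩, v, hvj, rfl⟩ := hz
      obtain ⟨β, hβ1, hβ2⟩ := lemA Z w hw j (hG1 j v hvj) (by simp)
      refine ⟨β, fun _ => by simpa using hβ2, fun i v' hv' he => ?_⟩
      rcases eq_or_ne i j with rfl | hij
      · obtain rfl : v' = v := List.append_cancel_left he.symm
        exact hβ1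
      · exact absurd he (graft_ne (hw j i (Ne.symm hij)))
    · refine ⟨0, fun hzZ => absurd hzZ hz, fun i v hv he => absurd ?_ hz⟩
      rw [he]
      exact Set.mem_iUnion.2 ⟨i, ⟨v, hv, rfl⟩⟩
  choose g' hg'1 hg'2 using key
  have hstep : CGValue Z' [] (⨆ z : {z : List Bool // z ∈ Z' ∧ z ∉ ([] : List (List Bool))}, (g' z.1 + 1)) := by
    refine CGValue.step _ (by simp [Lost]) g' (fun z hz _ => by simpa using hg'1 z hz)
  refine ⟨_, ?_, hstep⟩
  refine ciSup_le' fun i => ?_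
  rw [hG2 i]
  refine ciSup_le' ?_
  rintro ⟨v, hv1, _⟩
  have h1 : G i v ≤ g' (w i ++ v) := hg'2 _ i v hv1 rfl
  have hmem : w i ++ v ∈ Z' := Set.mem_iUnion.2 ⟨i, ⟨v, hv1, rfl⟩⟩
  calc G i v + 1 ≤ g' (w i ++ v) + 1 := add_le_add_left h1 1
    _ ≤ _ := le_ciSup (Ordinal.bddAbove_range _)
        (⟨w i ++ v, hmem, by simp⟩ : {z : List Bool // z ∈ Z' ∧ z ∉ ([] : List (List Bool))})
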